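/- Let O ⊆ P contain A. For every order ideal J ∈ 𝒥ₖ and every i ∈ [1,k], one has |w^{O,J}(i)| ≥ i. Consequently the tuple (w^{O,J}(1), …, w^{O,J}(k)) is admissible, i.e. its elements are pairwise distinct and for every l ∈ [1,n] the number of entries i_j with |i_j| ≤ l is at most l. -/

import Mathlib

open scoped Classical Pointwise

noncomputable section

/-- Position of `j` in the total order `1 ⋖ … ⋖ n ⋖ -n ⋖ … ⋖ -1` on `N`. -/
def ordKey (n : ℕ) (j : ℤ) : ℤ := if 0 < j then j else 2 * n + 1 + j

/-- Membership in the type C Gelfand–Tsetlin poset `P`: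
pairs `(i,j)` with `1 ≤ i ≤ n` and `i ≤ |j| ≤ n`. -/
def inP (n : ℕ) (p : ℤ × ℤ) : Prop :=
  1 ≤ p.1 ∧ p.1 ≤ (n : ℤ) ∧ p.1 ≤ |p.2| ∧ |p.2| ≤ (n : ℤ)

/-- The order relation `⪯` of `P`: `(i₁,j₁) ⪯ (i₂,j₂)` iff `i₁ ≤ i₂` and `j₁ ⩽̇ j₂`. -/
def ple (n : ℕ) (p q : ℤ × ℤ) : Prop :=
  p.1 ≤ q.1 ∧ ordKey n p.2 ≤ ordKey n q.2

/-- Strict version of `⪯`. -/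
def plt (n : ℕ) (p q : ℤ × ℤ) : Prop := ple n p q ∧ p ≠ q

/-- The elements of `N = {1,…,n,-n,…,-1}` listed in increasing `⋖` order. -/
def jList (n : ℕ) : List ℤ :=
  ((List.range n).map fun t => (t : ℤ) + 1) ++ ((List.range n).map fun t => (t : ℤ) - n)

/-- All pairs `(i,j)` with `i ∈ [1,n]`, `j ∈ N`, ordered first by `i` increasing,
then by `j` increasing with respect to `⋖`. -/
def posList (n : ℕ) : List (ℤ × ℤ) :=
  (List.range n).flatMap fun a => (jList n).map fun j => ((a : ℤ) + 1, j)

/-- `P` as a finite set. -/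
def Pfin (n : ℕ) : Finset (ℤ × ℤ) := (posList n).toFinset.filter (inP n)

/-- `N` as a finite set. -/
def Nfin (n : ℕ) : Finset ℤ := (jList n).toFinset

/-- The diagonal `A = {(i,i) : 1 ≤ i ≤ n}`. -/
def Aset (n : ℕ) : Finset (ℤ × ℤ) :=
  (Finset.range n).image fun t => (((t : ℤ) + 1, (t : ℤ) + 1) : ℤ × ℤ)

/-- Order ideals (downward closed subsets) of `P`. -/
def IsIdeal (n : ℕ) (J : Finset (ℤ × ℤ)) : Prop :=
  (∀ p ∈ J, inP n p) ∧ ∀ p ∈ J, ∀ q ∈ Pfin n, ple n q p → q ∈ J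

/-- The set of `≺`-maximal elements of `J`. -/
def maxPrec (n : ℕ) (J : Finset (ℤ × ℤ)) : Finset (ℤ × ℤ) :=
  J.filter fun p => ∀ q ∈ J, ple n p q → q = p

/-- `M_O(J) = (J ∩ O) ∪ max_≺(J)`. -/
def MO (n : ℕ) (O J : Finset (ℤ × ℤ)) : Finset (ℤ × ℤ) := (J ∩ O) ∪ maxPrec n J

/-- The permutation `w_M`: the product of the transpositions `s_{i,j}` over `(i,j) ∈ M`,
ordered first by `i` increasing and then by `j` increasing with respect to `⋖`
(the leftmost factor acts last). -/
def wPerm (n : ℕ) (M : Finset (ℤ × ℤ)) : Equiv.Perm ℤ :=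
  (((posList n).filter fun p => decide (p ∈ M)).map fun p => Equiv.swap p.1 p.2).prod

/-- `w^{O,J} = w_O⁻¹ ⬝ w_{M_O(J)}`. -/
def wOJ (n : ℕ) (O J : Finset (ℤ × ℤ)) : Equiv.Perm ℤ :=
  (wPerm n O)⁻¹ * wPerm n (MO n O J)

/-- The principal order ideal `⟨i,j⟩` of `(i,j) ∈ P`. -/
def princ (n : ℕ) (p : ℤ × ℤ) : Finset (ℤ × ℤ) := (Pfin n).filter fun q => ple n q p

/-- `r(i,j) = w^{O,⟨i,j⟩}(i)`. -/
def rMap (n : ℕ) (O : Finset (ℤ × ℤ)) (i j : ℤ) : ℤ := wOJ n O (princ n (i, j)) i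

/-- Inverse of `ordKey` (on the relevant range `[1, 2n]`). -/
def invOrdKey (n : ℕ) (t : ℤ) : ℤ := if t ≤ (n : ℤ) then t else t - (2 * n + 1)

/-- The `⋖`-maximal `j'` with `j' ⋖ j` and `(i,j') ∈ O`. -/
def prevO (n : ℕ) (O : Finset (ℤ × ℤ)) (i j : ℤ) : ℤ :=
  invOrdKey n (WithBot.unbotD 0 ((((Nfin n).filter fun j' => (i, j') ∈ O ∧ ordKey n j' < ordKey n j).image
    (ordKey n)).max))

/-- The pipe-dream linear transform `ξ` of `ℝ^P` (coordinates outside `P` are untouched):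
`ξ(ε_{i,i}) = ε_{i,r(i,i)}` and `ξ(ε_{i,j}) = ε_{i,r(i,j)} - ε_{i,r(i,j')}` for `j ≠ i`,
where `j'` is `⋖`-maximal with `j' ⋖ j` and `(i,j') ∈ O`. -/
def xiMap (n : ℕ) (O : Finset (ℤ × ℤ)) (x : (ℤ × ℤ) → ℝ) : (ℤ × ℤ) → ℝ := fun q =>
  if inP n q then
    (∑ j ∈ (Nfin n).filter (fun j => inP n (q.1, j) ∧ rMap n O q.1 j = q.2), x (q.1, j))
    - (∑ j ∈ (Nfin n).filter
        (fun j => inP n (q.1, j) ∧ j ≠ q.1 ∧ rMap n O q.1 (prevO n O q.1 j) = q.2), x (q.1, j))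
  else x q

/-- Indicator vector `1_{M_O(J)} ∈ ℝ^P`. -/
def indicMO (n : ℕ) (O J : Finset (ℤ × ℤ)) : (ℤ × ℤ) → ℝ := fun p =>
  if p ∈ MO n O J then 1 else 0

/-- The fundamental marked chain-order polytope `𝒬_O(ω_k)`:
the convex hull of the vectors `1_{M_O(J)}`, `J ∈ 𝒥ₖ`. -/
def QOfund (n : ℕ) (O : Finset (ℤ × ℤ)) (k : ℕ) : Set ((ℤ × ℤ) → ℝ) :=
  convexHull ℝ {x | ∃ J : Finset (ℤ × ℤ),
    IsIdeal n J ∧ (J ∩ Aset n).card = k ∧ x = indicMO n O J}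

/-- The marked chain-order polytope `𝒬_O(λ)` for `λ = a₁ω₁ + … + a_nω_n`:
the Minkowski sum `a₁𝒬_O(ω₁) + … + a_n𝒬_O(ω_n)`. -/
def QO (n : ℕ) (O : Finset (ℤ × ℤ)) (a : ℕ → ℕ) : Set ((ℤ × ℤ) → ℝ) :=
  ∑ k ∈ Finset.Icc 1 n, a k • QOfund n O k

/-- Integrality (lattice point) predicate. -/
def IsLat (x : (ℤ × ℤ) → ℝ) : Prop := ∀ p, ∃ m : ℤ, x p = m

/-- Type B: `λ(i) = a_i + … + a_{n-1} + a_n/2`. -/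
def lamB (n : ℕ) (a : ℕ → ℕ) (i : ℤ) : ℝ :=
  (∑ t ∈ Finset.Icc i.toNat (n - 1), (a t : ℝ)) + (a n : ℝ) / 2

/-- The type B poset polytope `𝒬^B_O(λ)` (H-description with factor `1/2`
on the coordinates in `B = {(i,-i)}`). -/
def QB (n : ℕ) (O : Finset (ℤ × ℤ)) (lam : ℤ → ℝ) : Set ((ℤ × ℤ) → ℝ) :=
  {x | (∀ i : ℤ, 1 ≤ i → i ≤ (n : ℤ) → x (i, i) = lam i) ∧
    (∀ p, inP n p → 0 ≤ x p) ∧ (∀ p, ¬ inP n p → x p = 0) ∧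
    ∀ (pq rs : ℤ × ℤ) (c : List (ℤ × ℤ)), pq ∈ O → inP n rs →
      (∀ q ∈ c, inP n q ∧ q ∉ O) →
      List.Chain' (plt n) (pq :: (c ++ [rs])) →
      (c.map x).sum ≤ x pq - (if rs.2 = -rs.1 then (1 : ℝ) / 2 else 1) * x rs}

/-- The point `x^{J,D}`. -/
def xJD (n : ℕ) (O J : Finset (ℤ × ℤ)) (D : Finset ℤ) : (ℤ × ℤ) → ℝ := fun p =>
  if p ∈ MO n O J then (if p.2 = -p.1 ∧ p.1 ∉ D then 2 else 1) else 0

/-- The projection `π : ℝ^P → ℝ^{P∖A}` (realized by zeroing the `A`-coordinates). -/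
def piA (x : (ℤ × ℤ) → ℝ) : (ℤ × ℤ) → ℝ := fun p => if p.2 = p.1 then 0 else x p

/-- The transformed type B poset polytope `Π^B_O(λ) = πξ(𝒬^B_O(λ))`. -/
def PiB (n : ℕ) (O : Finset (ℤ × ℤ)) (a : ℕ → ℕ) : Set ((ℤ × ℤ) → ℝ) :=
  (fun x => piA (xiMap n O x)) '' QB n O (lamB n a)

/-- The point `y^D ∈ ℝ^{P∖A}`. -/
def yD (D : Finset ℤ) : (ℤ × ℤ) → ℝ := fun p => if p.2 = -p.1 ∧ p.1 ∈ D then 1 else 0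

/-! ### basic list lemmas -/

lemma list_coe_eq (l : List ℕ) :
    ((do let a ← l; pure ((a : ℤ))) : List ℤ) = l.map (Nat.cast : ℕ → ℤ) := by
  induction l with
  | nil => rfl
  | cons x xs ih => simpa [List.flatMap_cons] using ih

lemma jList_eq (n : ℕ) : jList n =
    ((List.range n).map fun t : ℕ => ((t : ℤ) + 1)) ++
    ((List.range n).map fun t : ℕ => ((t : ℤ) - n)) := by
  simp only [jList, list_coe_eq, List.map_map]; rfl

lemma mem_jList {n : ℕ} {j : ℤ} : j ∈ jList n ↔ 1 ≤ |j| ∧ |j| ≤ n := by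
  rw [jList_eq]
  simp only [List.mem_append, List.mem_map, List.mem_range]
  constructor
  · rintro (⟨t, ht, rfl⟩ | ⟨t, ht, rfl⟩)
    · rw [abs_of_pos (by positivity)]; omega
    · rw [abs_of_neg (by omega : (t : ℤ) - n < 0)]; omega
  · rintro ⟨h1, h2⟩
    rcases le_or_gt 1 j with hj | hj
    · rw [abs_of_pos (by omega)] at h1 h2
      exact Or.inl ⟨(j - 1).toNat, by omega, by omega⟩
    · have hj' : j ≤ -1 := by rcases abs_cases j with ⟨h, _⟩ | ⟨h, _⟩ <;> omega
      rw [abs_of_neg (by omega)] at h2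
      exact Or.inr ⟨(j + n).toNat, by omega, by omega⟩

lemma ordKey_pos_eq {n : ℕ} {j : ℤ} (h : 0 < j) : ordKey n j = j := if_pos h

lemma ordKey_neg_eq {n : ℕ} {j : ℤ} (h : j ≤ 0) : ordKey n j = 2 * n + 1 + j :=
  if_neg (by omega)

lemma ordKey_inj {n : ℕ} {a b : ℤ} (ha0 : a ≠ 0) (ha : |a| ≤ n) (hb0 : b ≠ 0) (hb : |b| ≤ n)
    (h : ordKey n a = ordKey n b) : a = b := by
  rcases lt_or_gt_of_ne ha0 with ha' | ha' <;> rcases lt_or_gt_of_ne hb0 with hb' | hb'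
  · rw [ordKey_neg_eq ha'.le, ordKey_neg_eq hb'.le] at h; omega
  · rw [ordKey_neg_eq ha'.le, ordKey_pos_eq hb'] at h
    rw [abs_of_neg ha'] at ha; rw [abs_of_pos hb'] at hb; omega
  · rw [ordKey_pos_eq ha', ordKey_neg_eq hb'.le] at h
    rw [abs_of_pos ha'] at ha; rw [abs_of_neg hb'] at hb; omega
  · rw [ordKey_pos_eq ha', ordKey_pos_eq hb'] at h; omega

lemma jList_pairwise (n : ℕ) : (jList n).Pairwise fun a b => ordKey n a < ordKey n b := by
  rw [jList_eq]
  have h1 : ((List.range n).map fun t : ℕ => ((t : ℤ) + 1)).Pairwise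
      fun a b => ordKey n a < ordKey n b := by
    rw [List.pairwise_map]
    refine (List.pairwise_lt_range (n := n)).imp ?_
    intro a b hab
    rw [ordKey_pos_eq (by positivity), ordKey_pos_eq (by positivity)]
    omega
  have h2 : ((List.range n).map fun t : ℕ => ((t : ℤ) - n)).Pairwise
      fun a b => ordKey n a < ordKey n b := by
    rw [List.pairwise_map]
    refine List.Pairwise.imp_of_mem ?_ (List.pairwise_lt_range (n := n))
    intro a b ha hb hab
    rw [List.mem_range] at ha hb
    rw [ordKey_neg_eq (by omega), ordKey_neg_eq (by omega)]
    omega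
  refine List.pairwise_append.mpr ⟨h1, h2, ?_⟩
  intro a ha b hb
  simp only [List.mem_map, List.mem_range] at ha hb
  obtain ⟨t, ht, rfl⟩ := ha
  obtain ⟨s, hs, rfl⟩ := hb
  rw [ordKey_pos_eq (by positivity), ordKey_neg_eq (by omega)]
  omega

lemma posList_eq (n : ℕ) : posList n =
    (List.range n).flatMap fun a : ℕ => (jList n).map fun j => (((a : ℕ) : ℤ) + 1, j) := by
  simp only [posList, list_coe_eq, List.flatMap_map]

lemma mem_posList {n : ℕ} {p : ℤ × ℤ} :
    p ∈ posList n ↔ (1 ≤ p.1 ∧ p.1 ≤ n ∧ p.2 ∈ jList n) := by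
  rw [posList_eq]
  simp only [List.mem_flatMap, List.mem_map, List.mem_range]
  constructor
  · rintro ⟨a, ha, j, hj, rfl⟩
    refine ⟨by omega, by omega, hj⟩
  · rintro ⟨h1, h2, h3⟩
    refine ⟨(p.1 - 1).toNat, by omega, p.2, h3, ?_⟩
    rw [Int.toNat_of_nonneg (by omega), sub_add_cancel]

lemma mem_Pfin {n : ℕ} {p : ℤ × ℤ} : p ∈ Pfin n ↔ inP n p := by
  rw [Pfin, Finset.mem_filter, List.mem_toFinset, mem_posList]
  constructor
  · exact fun h => h.2
  · intro h
    exact ⟨⟨h.1, h.2.1, mem_jList.mpr ⟨by have := h.2.2.1; have := h.1; omega, h.2.2.2⟩⟩, h⟩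

lemma finset_coe_mem (s : Finset ℕ) (x : ℤ) :
    (x ∈ ((do let a ← s; pure ((a : ℤ))) : Finset ℤ)) ↔ ∃ a ∈ s, (a : ℤ) = x := by
  simp [Bind.bind, Finset.instMonad]

lemma mem_Aset {n : ℕ} {p : ℤ × ℤ} :
    p ∈ Aset n ↔ ∃ c : ℤ, 1 ≤ c ∧ c ≤ n ∧ p = (c, c) := by
  simp only [Aset, Finset.mem_image, finset_coe_mem, Finset.mem_range]
  constructor
  · rintro ⟨t, ⟨a, ha, rfl⟩, rfl⟩; exact ⟨(a : ℤ) + 1, by omega, by omega, rfl⟩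
  · rintro ⟨c, h1, h2, rfl⟩
    exact ⟨c - 1, ⟨(c - 1).toNat, by omega, by omega⟩, by rw [sub_add_cancel]⟩

/-! ### cycle lemmas -/

lemma swapProd_dedup (t : ℤ) (L : List ℤ) :
    ((L.map fun j => Equiv.swap t j).prod) =
    (((L.filter fun j => decide (j ≠ t)).map fun j => Equiv.swap t j).prod) := by
  induction L with
  | nil => rfl
  | cons x xs ih =>
    by_cases hx : x = t
    · subst hx
      simp only [List.map_cons, List.prod_cons, Equiv.swap_self, List.filter_cons]
      simpa [Equiv.Perm.refl_mul] using ih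
    · simp only [List.map_cons, List.prod_cons, List.filter_cons, decide_eq_true_eq, hx,
        if_pos, ih]
      simp [hx]

lemma swapProd_mem (t : ℤ) (L : List ℤ) (x : ℤ) :
    ((L.map fun j => Equiv.swap t j).prod) x ∈ x :: t :: L := by
  induction L generalizing x with
  | nil => simp
  | cons a as ih =>
    simp only [List.map_cons, List.prod_cons, Equiv.Perm.mul_apply]
    have := ih x
    simp only [List.mem_cons] at this ⊢
    rcases this with h | h | h
    · rw [h]
      rcases eq_or_ne x t with rfl | hxt
      · simp
      · rcases eq_or_ne x a with rfl | hxa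
        · simp
        · rw [Equiv.swap_apply_of_ne_of_ne hxt hxa]
          simp
    · rw [h, Equiv.swap_apply_left]; simp
    · rcases eq_or_ne ((as.map fun j => Equiv.swap t j).prod x) t with he | hne
      · rw [he, Equiv.swap_apply_left]; simp
      · rcases eq_or_ne ((as.map fun j => Equiv.swap t j).prod x) a with he | hne2
        · rw [he, Equiv.swap_apply_right]; simp
        · rw [Equiv.swap_apply_of_ne_of_ne hne hne2]; simp [h]

lemma swapProd_fix (t : ℤ) (L : List ℤ) (x : ℤ) (hxt : x ≠ t) (hxL : x ∉ L) :
    ((L.map fun j => Equiv.swap t j).prod) x = x := by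
  induction L with
  | nil => rfl
  | cons a as ih =>
    simp only [List.mem_cons, not_or] at hxL
    simp only [List.map_cons, List.prod_cons, Equiv.Perm.mul_apply, ih hxL.2]
    exact Equiv.swap_apply_of_ne_of_ne hxt hxL.1

lemma swapProd_pred (n : ℕ) (t : ℤ) (L : List ℤ)
    (hP : (t :: L).Pairwise fun a b => ordKey n a < ordKey n b)
    (x : ℤ) (hx : x ∈ L) :
    (((L.map fun j => Equiv.swap t j).prod) x = t ∨
      ((L.map fun j => Equiv.swap t j).prod) x ∈ L) ∧
    ordKey n (((L.map fun j => Equiv.swap t j).prod) x) < ordKey n x ∧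
    ∀ z ∈ L, ordKey n z < ordKey n x →
      ordKey n z ≤ ordKey n (((L.map fun j => Equiv.swap t j).prod) x) := by
  induction L generalizing x with
  | nil => cases hx
  | cons a as ih =>
    have hpc := List.pairwise_cons.mp hP
    have ht_all : ∀ z ∈ a :: as, ordKey n t < ordKey n z := hpc.1
    have hP2 := hpc.2
    have hpc2 := List.pairwise_cons.mp hP2
    have ha_as : ∀ z ∈ as, ordKey n a < ordKey n z := hpc2.1
    have hta : ordKey n t < ordKey n a := ht_all a (by simp)
    have hIHpair : (t :: as).Pairwise fun a b => ordKey n a < ordKey n b := by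
      refine List.Pairwise.sublist ?_ hP
      exact (List.cons_sublist_cons).mpr (List.sublist_cons_self a as)
    simp only [List.map_cons, List.prod_cons, Equiv.Perm.mul_apply]
    rcases List.mem_cons.mp hx with rfl | hxas
    · have hxnotas : x ∉ as := fun h => lt_irrefl _ (ha_as x h)
      have hxt : x ≠ t := fun h => by subst h; exact lt_irrefl _ hta
      rw [swapProd_fix t as x hxt hxnotas, Equiv.swap_apply_right]
      refine ⟨Or.inl rfl, hta, ?_⟩
      intro z hz hzx
      rcases List.mem_cons.mp hz with rfl | hzas
      · exact absurd hzx (lt_irrefl _)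
      · exact absurd (lt_trans (ha_as z hzas) hzx) (lt_irrefl _)
    · obtain ⟨hy', hlt', hmax'⟩ := ih hIHpair x hxas
      set y' := ((as.map fun j => Equiv.swap t j).prod) x with hy'def
      rcases hy' with hy't | hy'as
      · rw [hy't, Equiv.swap_apply_left]
        refine ⟨Or.inr (List.mem_cons_self (a := a) (l := as)), ha_as x hxas, ?_⟩
        intro z hz hzx
        rcases List.mem_cons.mp hz with rfl | hzas
        · exact le_refl _
        · have := hmax' z hzas hzx
          rw [hy't] at this
          exact this.trans hta.le
      · have hy'ne_t : y' ≠ t := by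
          intro h; rw [h] at hy'as
          exact lt_irrefl _ (ht_all t (List.mem_cons_of_mem a hy'as))
        have hy'ne_a : y' ≠ a := by
          intro h; rw [h] at hy'as
          exact lt_irrefl _ (ha_as a hy'as)
        rw [Equiv.swap_apply_of_ne_of_ne hy'ne_t hy'ne_a]
        refine ⟨Or.inr (List.mem_cons_of_mem a hy'as), hlt', ?_⟩
        intro z hz hzx
        rcases List.mem_cons.mp hz with rfl | hzas
        · exact le_of_lt (ha_as y' hy'as)
        · exact hmax' z hzas hzx

/-! ### row decomposition -/

def rowP (n : ℕ) (S : Finset (ℤ × ℤ)) (t : ℤ) : Equiv.Perm ℤ :=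
  (((jList n).filter fun j => decide ((t, j) ∈ S)).map fun j => Equiv.swap t j).prod

def prodRows (n : ℕ) (S : Finset (ℤ × ℤ)) (l : List ℕ) : Equiv.Perm ℤ :=
  (l.map fun u : ℕ => rowP n S ((u : ℕ) : ℤ)).prod

lemma prodRows_nil (n : ℕ) (S : Finset (ℤ × ℤ)) : prodRows n S [] = 1 := rfl

lemma prodRows_cons (n : ℕ) (S : Finset (ℤ × ℤ)) (u : ℕ) (l : List ℕ) :
    prodRows n S (u :: l) = rowP n S (u : ℤ) * prodRows n S l := by
  simp [prodRows]

lemma prodRows_append (n : ℕ) (S : Finset (ℤ × ℤ)) (l₁ l₂ : List ℕ) :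
    prodRows n S (l₁ ++ l₂) = prodRows n S l₁ * prodRows n S l₂ := by
  simp [prodRows]

lemma wPerm_eq_rows (n : ℕ) (S : Finset (ℤ × ℤ)) :
    wPerm n S = prodRows n S (List.range' 1 n) := by
  rw [wPerm, posList_eq]
  have h1 : ∀ (l : List ℕ),
      ((((l.flatMap fun a : ℕ => (jList n).map fun j => (((a : ℕ) : ℤ) + 1, j)).filter
        fun p => decide (p ∈ S)).map fun p => Equiv.swap p.1 p.2).prod)
      = (l.map fun a : ℕ => rowP n S ((a : ℤ) + 1)).prod := by
    intro l
    induction l with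
    | nil => rfl
    | cons b bs ih =>
      rw [List.flatMap_cons, List.filter_append, List.map_append, List.prod_append, ih,
        List.map_cons, List.prod_cons]
      congr 1
      rw [List.filter_map, List.map_map, rowP]
      congr 1
  rw [h1]
  have : List.range' 1 n = (List.range n).map (fun a => 1 + a) := List.range'_eq_map_range (s := 1) (n := n)
  rw [this, prodRows, List.map_map]
  congr 1
  apply List.map_congr_left
  intro a _
  simp only [Function.comp_apply]
  congr 1
  push_cast
  ring

def Lrow (n : ℕ) (S : Finset (ℤ × ℤ)) (t : ℤ) : List ℤ :=
  ((jList n).filter fun j => decide ((t, j) ∈ S)).filter fun j => decide (j ≠ t)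

lemma rowP_eq (n : ℕ) (S : Finset (ℤ × ℤ)) (t : ℤ) :
    rowP n S t = ((Lrow n S t).map fun j => Equiv.swap t j).prod :=
  swapProd_dedup t _

lemma mem_Lrow {n : ℕ} {S : Finset (ℤ × ℤ)} {t j : ℤ} :
    j ∈ Lrow n S t ↔ j ∈ jList n ∧ (t, j) ∈ S ∧ j ≠ t := by
  simp only [Lrow, List.mem_filter, decide_eq_true_eq]
  tauto

lemma ordKey_lt_of_row {n : ℕ} {t j : ℤ} (ht1 : 1 ≤ t) (htn : t ≤ n)
    (hj1 : t ≤ |j|) (hj2 : |j| ≤ n) (hjt : j ≠ t) : ordKey n t < ordKey n j := by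
  rw [ordKey_pos_eq (by omega)]
  rcases le_or_gt j 0 with hj | hj
  · rw [ordKey_neg_eq hj]
    rcases abs_cases j with ⟨h, _⟩ | ⟨h, _⟩ <;> omega
  · rw [ordKey_pos_eq hj]
    rw [abs_of_pos hj] at hj1
    omega

lemma Lrow_pairwise {n : ℕ} {S : Finset (ℤ × ℤ)} (hS : S ⊆ Pfin n) {t : ℤ}
    (ht1 : 1 ≤ t) (htn : t ≤ (n : ℤ)) :
    (t :: Lrow n S t).Pairwise fun a b => ordKey n a < ordKey n b := by
  rw [List.pairwise_cons]
  constructor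
  · intro j hj
    obtain ⟨hjl, hjS, hjt⟩ := mem_Lrow.mp hj
    have hP := mem_Pfin.mp (hS hjS)
    exact ordKey_lt_of_row ht1 htn hP.2.2.1 hP.2.2.2 hjt
  · exact ((jList_pairwise n).sublist List.filter_sublist).sublist
      List.filter_sublist

lemma rowP_fix {n : ℕ} {S : Finset (ℤ × ℤ)} (hS : S ⊆ Pfin n) {t x : ℤ}
    (ht1 : 1 ≤ t) (hx : |x| < t) : rowP n S t x = x := by
  rw [rowP_eq]
  apply swapProd_fix
  · intro h; subst h; rw [abs_of_pos (by omega)] at hx; omega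
  · intro h
    obtain ⟨_, hjS, _⟩ := mem_Lrow.mp h
    have hP := mem_Pfin.mp (hS hjS)
    have := hP.2.2.1
    simp only at this
    omega

lemma rowP_mem {n : ℕ} (S : Finset (ℤ × ℤ)) (t x : ℤ) :
    rowP n S t x = x ∨ rowP n S t x = t ∨ (t, rowP n S t x) ∈ S := by
  rw [rowP_eq]
  have := swapProd_mem t (Lrow n S t) x
  rcases List.mem_cons.mp this with h | h
  · exact Or.inl h
  rcases List.mem_cons.mp h with h | h
  · exact Or.inr (Or.inl h)
  · exact Or.inr (Or.inr (mem_Lrow.mp h).2.1)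

lemma prodRows_fix {n : ℕ} {S : Finset (ℤ × ℤ)} (hS : S ⊆ Pfin n) {x : ℤ} (l : List ℕ)
    (hl : ∀ u ∈ l, 1 ≤ (u : ℤ) ∧ |x| < u) : prodRows n S l x = x := by
  induction l with
  | nil => rfl
  | cons u us ih =>
    rw [prodRows_cons, Equiv.Perm.mul_apply, ih fun v hv => hl v (List.mem_cons_of_mem u hv)]
    exact rowP_fix hS (hl u (List.mem_cons_self (a := u) (l := us))).1 (hl u (List.mem_cons_self (a := u) (l := us))).2

/-! ### poset structure -/

lemma MO_subset_J {n : ℕ} (O J : Finset (ℤ × ℤ)) : MO n O J ⊆ J := by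
  intro p hp
  rcases Finset.mem_union.mp hp with h | h
  · exact (Finset.mem_inter.mp h).1
  · exact (Finset.mem_filter.mp h).1

lemma J_subset_Pfin {n : ℕ} {J : Finset (ℤ × ℤ)} (hJ : IsIdeal n J) : J ⊆ Pfin n :=
  fun p hp => mem_Pfin.mpr (hJ.1 p hp)

lemma diag_mem {n k : ℕ} {J : Finset (ℤ × ℤ)} (hJ : IsIdeal n J)
    (hJk : (J ∩ Aset n).card = k) (c : ℤ) (hc1 : 1 ≤ c) (hck : c ≤ k) : (c, c) ∈ J := by
  classical
  set D : Finset ℤ := (J ∩ Aset n).image Prod.fst with hD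
  have hDcard : D.card = k := by
    rw [hD, Finset.card_image_of_injOn, hJk]
    intro p hp q hq hpq
    obtain ⟨cp, _, _, rfl⟩ := mem_Aset.mp (Finset.mem_inter.mp hp).2
    obtain ⟨cq, _, _, rfl⟩ := mem_Aset.mp (Finset.mem_inter.mp hq).2
    simp only at hpq
    rw [hpq]
  have hDbound : ∀ d ∈ D, 1 ≤ d ∧ d ≤ (n : ℤ) := by
    intro d hd
    obtain ⟨p, hp, rfl⟩ := Finset.mem_image.mp hd
    obtain ⟨cp, h1, h2, rfl⟩ := mem_Aset.mp (Finset.mem_inter.mp hp).2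
    exact ⟨h1, h2⟩
  have hDclosed : ∀ d ∈ D, ∀ e : ℤ, 1 ≤ e → e ≤ d → e ∈ D := by
    intro d hd e he1 he2
    obtain ⟨p, hp, rfl⟩ := Finset.mem_image.mp hd
    obtain ⟨cp, h1, h2, rfl⟩ := mem_Aset.mp (Finset.mem_inter.mp hp).2
    have hpJ := (Finset.mem_inter.mp hp).1
    simp only at he2
    have heP : ((e, e) : ℤ × ℤ) ∈ Pfin n := by
      rw [mem_Pfin]
      refine ⟨he1, by omega, by rw [abs_of_pos (by omega)], by rw [abs_of_pos (by omega)]; omega⟩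
    have heJ : ((e, e) : ℤ × ℤ) ∈ J := by
      refine hJ.2 _ hpJ _ heP ⟨he2, ?_⟩
      rw [ordKey_pos_eq (by omega), ordKey_pos_eq (by omega)]
      exact he2
    refine Finset.mem_image.mpr ⟨(e, e), Finset.mem_inter.mpr ⟨heJ, ?_⟩, rfl⟩
    exact mem_Aset.mpr ⟨e, he1, by omega, rfl⟩
  by_cases hcD : c ∈ D
  · obtain ⟨p, hp, rfl⟩ := Finset.mem_image.mp hcD
    obtain ⟨cp, h1, h2, rfl⟩ := mem_Aset.mp (Finset.mem_inter.mp hp).2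
    exact (Finset.mem_inter.mp hp).1
  · exfalso
    have hsub : D ⊆ Finset.Icc 1 (c - 1) := by
      intro d hd
      rcases le_or_gt c d with h | h
      · exact absurd (hDclosed d hd c hc1 h) hcD
      · exact Finset.mem_Icc.mpr ⟨(hDbound d hd).1, by omega⟩
    have := Finset.card_le_card hsub
    rw [hDcard, Int.card_Icc] at this
    omega

lemma rowAgree {n : ℕ} {O J : Finset (ℤ × ℤ)} (hO : O ⊆ Pfin n) (hJ : IsIdeal n J)
    {s x y : ℤ} (hx : ((s + 1, x) : ℤ × ℤ) ∈ J) (hy : ordKey n y ≤ ordKey n x) :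
    ((s, y) ∈ MO n O J ↔ (s, y) ∈ O) := by
  constructor
  · intro h
    rcases Finset.mem_union.mp h with h | h
    · exact (Finset.mem_inter.mp h).2
    · exfalso
      obtain ⟨hmem, hmax⟩ := Finset.mem_filter.mp h
      have := hmax (s + 1, x) hx ⟨by simp, hy⟩
      simp only [Prod.mk.injEq] at this
      omega
  · intro h
    refine Finset.mem_union_left _ (Finset.mem_inter.mpr ⟨?_, h⟩)
    exact hJ.2 _ hx _ (hO h) ⟨by simp, hy⟩

lemma rowP_agree {n : ℕ} {O J : Finset (ℤ × ℤ)} (hO : O ⊆ Pfin n) (hJ : IsIdeal n J)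
    {s x : ℤ} (hs1 : 1 ≤ s) (hsn : s ≤ (n : ℤ))
    (hx : ((s + 1, x) : ℤ × ℤ) ∈ J) :
    rowP n (MO n O J) s x = rowP n O s x := by
  have hM : MO n O J ⊆ Pfin n := fun p hp => J_subset_Pfin hJ (MO_subset_J O J hp)
  have hPx := hJ.1 _ hx
  obtain ⟨-, hxn, hxabs, hxabsn⟩ := hPx
  simp only at hxn hxabs hxabsn
  have hxs : x ≠ s := by
    intro h; subst h; rw [abs_of_pos (by omega)] at hxabs; omega
  have hxjl : x ∈ jList n := mem_jList.mpr ⟨by omega, hxabsn⟩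
  have hmem_iff : x ∈ Lrow n (MO n O J) s ↔ x ∈ Lrow n O s := by
    rw [mem_Lrow, mem_Lrow, rowAgree hO hJ hx (le_refl _)]
  by_cases hxin : x ∈ Lrow n O s
  · -- x moved by both rows
    have hxinM : x ∈ Lrow n (MO n O J) s := hmem_iff.mpr hxin
    have pairM := Lrow_pairwise hM hs1 hsn
    have pairO := Lrow_pairwise hO hs1 hsn
    rw [rowP_eq, rowP_eq]
    obtain ⟨humem, hult, humax⟩ := swapProd_pred n s (Lrow n (MO n O J) s) pairM x hxinM
    obtain ⟨hvmem, hvlt, hvmax⟩ := swapProd_pred n s (Lrow n O s) pairO x hxin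
    -- transfer memberships
    have transfMO : ∀ z, z ∈ Lrow n (MO n O J) s → ordKey n z < ordKey n x →
        z ∈ Lrow n O s := by
      intro z hz hzx
      obtain ⟨h1, h2, h3⟩ := mem_Lrow.mp hz
      exact mem_Lrow.mpr ⟨h1, (rowAgree hO hJ hx hzx.le).mp h2, h3⟩
    have transfO : ∀ z, z ∈ Lrow n O s → ordKey n z < ordKey n x →
        z ∈ Lrow n (MO n O J) s := by
      intro z hz hzx
      obtain ⟨h1, h2, h3⟩ := mem_Lrow.mp hz
      exact mem_Lrow.mpr ⟨h1, (rowAgree hO hJ hx hzx.le).mpr h2, h3⟩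
    have hsleM : ∀ z, z = s ∨ z ∈ Lrow n (MO n O J) s → ordKey n s ≤ ordKey n z := by
      rintro z (rfl | hz)
      · exact le_refl _
      · exact ((List.pairwise_cons.mp pairM).1 z hz).le
    have hsleO : ∀ z, z = s ∨ z ∈ Lrow n O s → ordKey n s ≤ ordKey n z := by
      rintro z (rfl | hz)
      · exact le_refl _
      · exact ((List.pairwise_cons.mp pairO).1 z hz).le
    have hule : ordKey n (((Lrow n (MO n O J) s).map fun j => Equiv.swap s j).prod x)
        ≤ ordKey n (((Lrow n O s).map fun j => Equiv.swap s j).prod x) := by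
      rcases humem with hus | huL
      · rw [hus]; exact hsleO _ hvmem
      · exact hvmax _ (transfMO _ huL hult) hult
    have hvle : ordKey n (((Lrow n O s).map fun j => Equiv.swap s j).prod x)
        ≤ ordKey n (((Lrow n (MO n O J) s).map fun j => Equiv.swap s j).prod x) := by
      rcases hvmem with hvs | hvL
      · rw [hvs]; exact hsleM _ humem
      · exact humax _ (transfO _ hvL hvlt) hvlt
    have habs : ∀ z : ℤ, z = s ∨ z ∈ jList n → z ≠ 0 ∧ |z| ≤ (n : ℤ) := by
      rintro z (rfl | hz)
      · constructor
        · omega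
        · rw [abs_of_pos (by omega)]; omega
      · obtain ⟨h1, h2⟩ := mem_jList.mp hz
        exact ⟨by rcases abs_cases z with ⟨h, _⟩ | ⟨h, _⟩ <;> omega, h2⟩
    have hu' := habs _ (by
      rcases humem with h | h
      · exact Or.inl h
      · exact Or.inr (mem_Lrow.mp h).1)
    have hv' := habs _ (by
      rcases hvmem with h | h
      · exact Or.inl h
      · exact Or.inr (mem_Lrow.mp h).1)
    exact ordKey_inj hu'.1 hu'.2 hv'.1 hv'.2 (le_antisymm hule hvle)
  · have hxinM : x ∉ Lrow n (MO n O J) s := fun h => hxin (hmem_iff.mp h)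
    rw [rowP_eq, rowP_eq, swapProd_fix _ _ _ hxs hxinM, swapProd_fix _ _ _ hxs hxin]

lemma main_abs {n k : ℕ} {O J : Finset (ℤ × ℤ)} (hA : Aset n ⊆ O) (hO : O ⊆ Pfin n)
    (hJ : IsIdeal n J) (hJk : (J ∩ Aset n).card = k) (i : ℤ) (h1 : 1 ≤ i) (h2 : i ≤ (k : ℤ)) :
    i ≤ |wOJ n O J i| := by
  classical
  have hM : MO n O J ⊆ Pfin n := fun p hp => J_subset_Pfin hJ (MO_subset_J O J hp)
  have hkn : k ≤ n := by
    rw [← hJk]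
    calc (J ∩ Aset n).card ≤ (Aset n).card := Finset.card_le_card (Finset.inter_subset_right)
    _ ≤ n := by
      have hsub : Aset n ⊆ (Finset.Icc (1 : ℤ) (n : ℤ)).image fun c => ((c, c) : ℤ × ℤ) := by
        intro p hp
        obtain ⟨c, hc1, hc2, rfl⟩ := mem_Aset.mp hp
        exact Finset.mem_image.mpr ⟨c, Finset.mem_Icc.mpr ⟨hc1, hc2⟩, rfl⟩
      calc (Aset n).card ≤ _ := Finset.card_le_card hsub
        _ ≤ (Finset.Icc (1 : ℤ) (n : ℤ)).card := Finset.card_image_le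
        _ = n := by rw [Int.card_Icc]; omega
  set i' : ℕ := i.toNat with hi'
  have hii : ((i' : ℕ) : ℤ) = i := Int.toNat_of_nonneg (by omega)
  have hi'1 : 1 ≤ i' := by omega
  have hi'k : i' ≤ k := by omega
  have hi'n : i' ≤ n := le_trans hi'k hkn
  -- the A-trajectory
  set As : ℕ → ℤ := fun t => prodRows n (MO n O J) (List.range' t (n + 1 - t)) i with hAs
  -- base : value entering row i' is i itself
  have hbase0 : prodRows n (MO n O J) (List.range' (i' + 1) (n - i')) i = i := by
    apply prodRows_fix hM
    intro u hu
    rw [List.mem_range'_1] at hu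
    constructor
    · omega
    · rw [abs_of_pos (by omega)]; omega
  have hsplit : ∀ t : ℕ, 1 ≤ t → t ≤ n →
      List.range' t (n + 1 - t) = t :: List.range' (t + 1) (n - t) := by
    intro t ht1 htn
    have : n + 1 - t = (n - t) + 1 := by omega
    rw [this, List.range'_succ]
  have hAstep : ∀ t : ℕ, 1 ≤ t → t ≤ n → As t = rowP n (MO n O J) (t : ℤ) (As (t + 1)) := by
    intro t ht1 htn
    rw [hAs]
    simp only
    rw [hsplit t ht1 htn, prodRows_cons, Equiv.Perm.mul_apply,
      show n + 1 - (t + 1) = n - t from by omega]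
  have hbase : ((i' : ℤ), As i') ∈ J := by
    have hAsi1 : As (i' + 1) = i := by
      rw [hAs]
      simp only
      rw [show n + 1 - (i' + 1) = n - i' from by omega]
      exact hbase0
    have : As i' = rowP n (MO n O J) (i' : ℤ) i := by
      rw [hAstep i' hi'1 hi'n, hAsi1]
    rw [this]
    rcases rowP_mem (MO n O J) (i' : ℤ) i with h | h | h
    · rw [h, ← hii]
      exact diag_mem hJ hJk _ (by omega) (by omega)
    · rw [h]
      exact diag_mem hJ hJk _ (by omega) (by omega)
    · exact MO_subset_J O J h
  -- downward induction
  have hinv : ∀ d : ℕ, ∀ t : ℕ, t + d = i' → 1 ≤ t → (((t : ℕ) : ℤ), As t) ∈ J := by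
    intro d
    induction d with
    | zero =>
      intro t ht h1t
      have : t = i' := by omega
      subst this
      exact hbase
    | succ d ih =>
      intro t ht h1t
      have hiht := ih (t + 1) (by omega) (by omega)
      have htn : t ≤ n := by omega
      rw [hAstep t h1t htn]
      rcases rowP_mem (MO n O J) (t : ℤ) (As (t + 1)) with h | h | h
      · rw [h]
        have hPt1 := hJ.1 _ hiht
        obtain ⟨hq1, hq2, hq3, hq4⟩ := hPt1
        simp only at hq1 hq2 hq3 hq4
        push_cast at hq3
        refine hJ.2 _ hiht _ (mem_Pfin.mpr ⟨by simp only; omega, by simp only; push_cast; omega,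
          by simp only; omega, by simp only; omega⟩) ⟨by push_cast; omega, le_refl _⟩
      · rw [h]
        exact diag_mem hJ hJk _ (by omega) (by omega)
      · exact MO_subset_J O J h
  -- row agreement rewriting
  have heq : ∀ d : ℕ, ∀ t : ℕ, t + d = i' → 1 ≤ t →
      prodRows n (MO n O J) (List.range' t (n + 1 - t)) i =
      prodRows n O (List.range' t (i' - t)) (As i') := by
    intro d
    induction d with
    | zero =>
      intro t ht h1t
      have : t = i' := by omega
      subst this
      simp only [Nat.sub_self, List.range'_zero, prodRows_nil, Equiv.Perm.one_apply]
      rfl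
    | succ d ih =>
      intro t ht h1t
      have htn : t ≤ n := by omega
      have hx : (((t : ℤ) + 1), As (t + 1)) ∈ J := by
        have := hinv d (t + 1) (by omega) (by omega)
        push_cast at this
        exact this
      calc prodRows n (MO n O J) (List.range' t (n + 1 - t)) i
          = rowP n (MO n O J) (t : ℤ) (As (t + 1)) := hAstep t h1t htn
        _ = rowP n O (t : ℤ) (As (t + 1)) := rowP_agree hO hJ (by omega) (by push_cast; omega) hx
        _ = rowP n O (t : ℤ) (prodRows n O (List.range' (t + 1) (i' - (t + 1))) (As i')) := by
            rw [← ih (t + 1) (by omega) (by omega)]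
        _ = prodRows n O (List.range' t (i' - t)) (As i') := by
            have : i' - t = (i' - (t + 1)) + 1 := by omega
            rw [this, List.range'_succ, prodRows_cons, Equiv.Perm.mul_apply]
  -- assemble
  have hwM : wPerm n (MO n O J) i = prodRows n O (List.range' 1 (i' - 1)) (As i') := by
    rw [wPerm_eq_rows]
    have h := heq (i' - 1) 1 (by omega) (le_refl 1)
    have hn1 : n + 1 - 1 = n := by omega
    rw [hn1] at h
    exact h
  have hwO : wPerm n O = prodRows n O (List.range' 1 (i' - 1)) *
      prodRows n O (List.range' i' (n + 1 - i')) := by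
    rw [wPerm_eq_rows, ← prodRows_append]
    congr 1
    have := List.range'_append (s := 1) (m := i' - 1) (n := n + 1 - i') (step := 1)
    simp only [one_mul] at this
    rw [show 1 + (i' - 1) = i' by omega] at this
    rw [this]
    congr 1
    omega
  have hfinal : wOJ n O J i = (prodRows n O (List.range' i' (n + 1 - i')))⁻¹ (As i') := by
    rw [wOJ, Equiv.Perm.mul_apply, hwM, hwO, mul_inv_rev, Equiv.Perm.mul_apply]
    exact congrArg _ (Equiv.symm_apply_apply _ _)
  rw [hfinal]
  by_contra hcon
  push_neg at hcon
  set e := (prodRows n O (List.range' i' (n + 1 - i')))⁻¹ (As i') with he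
  have hCe : prodRows n O (List.range' i' (n + 1 - i')) e = As i' := by
    rw [he]
    exact Equiv.apply_symm_apply _ _
  have hfix : prodRows n O (List.range' i' (n + 1 - i')) e = e := by
    apply prodRows_fix hO
    intro u hu
    rw [List.mem_range'_1] at hu
    constructor
    · omega
    · omega
  have hAsi : i' ≤ |As i'| := by
    have := hJ.1 _ hbase
    obtain ⟨_, _, h3, _⟩ := this
    simpa using h3
  rw [hfix] at hCe
  rw [← hCe] at hAsi
  omega

/-- For `J ∈ 𝒥ₖ` and `i ∈ [1,k]`, `|w^{O,J}(i)| ≥ i`; consequently the tuple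
`(w^{O,J}(1),…,w^{O,J}(k))` is admissible: pairwise distinct entries, and for every
`l ∈ [1,n]` at most `l` entries have absolute value `≤ l`. -/
theorem stmt4 (n k : ℕ) (O J : Finset (ℤ × ℤ)) (hA : Aset n ⊆ O) (hO : O ⊆ Pfin n)
    (hJ : IsIdeal n J) (hJk : (J ∩ Aset n).card = k) :
    (∀ i : ℤ, 1 ≤ i → i ≤ (k : ℤ) → i ≤ |wOJ n O J i|) ∧
    (∀ i₁ i₂ : ℤ, 1 ≤ i₁ → i₁ ≤ (k : ℤ) → 1 ≤ i₂ → i₂ ≤ (k : ℤ) →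
      wOJ n O J i₁ = wOJ n O J i₂ → i₁ = i₂) ∧
    (∀ l : ℤ, 1 ≤ l → l ≤ (n : ℤ) →
      ((((Finset.Icc (1 : ℤ) (k : ℤ)).filter fun i => |wOJ n O J i| ≤ l).card : ℤ) ≤ l)) := by
  refine ⟨fun i h1 h2 => main_abs hA hO hJ hJk i h1 h2, ?_, ?_⟩
  · intro i₁ i₂ _ _ _ _ h
    exact (wOJ n O J).injective h
  · intro l hl1 hln
    have hsub : (Finset.Icc (1 : ℤ) (k : ℤ)).filter (fun i => |wOJ n O J i| ≤ l) ⊆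
        Finset.Icc (1 : ℤ) l := by
      intro i hi
      obtain ⟨hIcc, habs⟩ := Finset.mem_filter.mp hi
      obtain ⟨hi1, hik⟩ := Finset.mem_Icc.mp hIcc
      exact Finset.mem_Icc.mpr ⟨hi1, le_trans (main_abs hA hO hJ hJk i hi1 hik) habs⟩
    calc ((((Finset.Icc (1 : ℤ) (k : ℤ)).filter fun i => |wOJ n O J i| ≤ l).card : ℤ))
        ≤ ((Finset.Icc (1 : ℤ) l).card : ℤ) := by
          exact_mod_cast Nat.cast_le.mpr (Finset.card_le_card hsub)
      _ ≤ l := by rw [Int.card_Icc]; omega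


end
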